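/- Let k ≥ 1 and let c^(0), c^(1), …, c^(k) be compositions (possibly empty) with c^(k) nonempty. Then for every permutation τ of {1,…,k−1}, P(c^(0) ⊕ (3) ⊕ c^(1) ⊕ (3) ⊕ ⋯ ⊕ (3) ⊕ c^(k−1) ⊕ (3) ⊕ c^(k)) = P(c^(0) ⊕ (3) ⊕ c^(τ(1)) ⊕ (3) ⊕ ⋯ ⊕ (3) ⊕ c^(τ(k−1)) ⊕ (3) ⊕ c^(k)); that is, the value of P is unchanged when the middle factors c^(1), …, c^(k−1) are permuted arbitrarily. -/

import Mathlib

/-- `i` (1-based, with `1 < i < n`) is a peak of the permutation `σ` of `{1,…,n}`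
(represented as a permutation of `Fin n`, position `j` (1-based) being index `j-1`). -/
def IsPeak {n : ℕ} (σ : Equiv.Perm (Fin n)) (i : ℕ) : Prop :=
  ∃ (h₂ : 2 ≤ i) (h₃ : i < n),
    σ ⟨i - 2, by omega⟩ < σ ⟨i - 1, by omega⟩ ∧ σ ⟨i, h₃⟩ < σ ⟨i - 1, by omega⟩

open Classical in
/-- The peak set of a permutation of `{1,…,n}` (as a set of 1-based positions). -/
noncomputable def peakSet {n : ℕ} (σ : Equiv.Perm (Fin n)) : Finset ℕ :=
  (Finset.range n).filter (fun i => IsPeak σ i)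

/-- `P(S;n)`: the number of permutations of `{1,…,n}` with peak set `S`. -/
noncomputable def numPeakSet (n : ℕ) (S : Finset ℕ) : ℕ :=
  Nat.card {σ : Equiv.Perm (Fin n) // peakSet σ = S}

/-- `c` is a composition of `n`: a list of positive integers summing to `n`. -/
def IsComposition (n : ℕ) (c : List ℕ) : Prop :=
  (∀ x ∈ c, 0 < x) ∧ c.sum = n

/-- The set `S(c)` of proper partial sums of the composition `c`. -/
def compPeaks (c : List ℕ) : Finset ℕ :=
  (Finset.range (c.length - 1)).image (fun i => (c.take (i + 1)).sum)

/-- `P(c)`: the number of permutations of `{1,…,|c|}` whose peak set is `S(c)`. -/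
noncomputable def Pcomp (c : List ℕ) : ℕ :=
  numPeakSet c.sum (compPeaks c)

/-- A composition is maximal if `P(b) ≤ P(c)` for every composition `b` of the same size. -/
def IsMaximal (c : List ℕ) : Prop :=
  ∀ b : List ℕ, IsComposition c.sum b → Pcomp b ≤ Pcomp c

/-- `chain3 c k = c 0 ⊕ (3) ⊕ c 1 ⊕ (3) ⊕ ⋯ ⊕ (3) ⊕ c k`. -/
def chain3 (c : ℕ → List ℕ) : ℕ → List ℕ
  | 0 => c 0
  | k + 1 => chain3 c k ++ [3] ++ c (k + 1)
open Finset Equiv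

variable {p q : ℕ}

noncomputable def mkPerm (A : Finset (Fin (p + q))) (hA : A.card = p)
    (hA' : Aᶜ.card = q) (α : Perm (Fin p)) (β : Perm (Fin q)) : Perm (Fin (p + q)) :=
  finSumFinEquiv.symm.trans <|
    (Equiv.sumCongr (α.trans (A.orderIsoOfFin hA).toEquiv)
      (β.trans (Aᶜ.orderIsoOfFin hA').toEquiv)).trans <|
    ((Equiv.sumCongr (Equiv.refl _) (Equiv.subtypeEquivRight (fun _ => Finset.mem_compl))).trans
      (Equiv.sumCompl (· ∈ A)))

theorem mkPerm_left (A : Finset (Fin (p + q))) (hA : A.card = p) (hA' : Aᶜ.card = q)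
    (α : Perm (Fin p)) (β : Perm (Fin q)) (j : ℕ) (hj : j < p) (hj' : j < p + q) :
    mkPerm A hA hA' α β ⟨j, hj'⟩ = A.orderEmbOfFin hA (α ⟨j, hj⟩) := by
  have h1 : (⟨j, hj'⟩ : Fin (p+q)) = Fin.castAdd q ⟨j, hj⟩ := rfl
  rw [h1]
  have h2 : (mkPerm A hA hA' α β) (Fin.castAdd q ⟨j, hj⟩) =
    (((Equiv.sumCongr (Equiv.refl _) (Equiv.subtypeEquivRight (fun _ => Finset.mem_compl))).trans
      (Equiv.sumCompl (· ∈ A)))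
      ((Equiv.sumCongr (α.trans (A.orderIsoOfFin hA).toEquiv)
      (β.trans (Aᶜ.orderIsoOfFin hA').toEquiv))
        (finSumFinEquiv.symm (Fin.castAdd q ⟨j, hj⟩)))) := rfl
  rw [h2]
  rw [finSumFinEquiv_symm_apply_castAdd]
  simp only [Equiv.sumCongr_apply, Sum.map_inl, Equiv.trans_apply, Equiv.coe_refl,
    Equiv.sumCompl_apply_inl]
  exact (Finset.coe_orderIsoOfFin_apply A hA _)

theorem mkPerm_right (A : Finset (Fin (p + q))) (hA : A.card = p) (hA' : Aᶜ.card = q)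
    (α : Perm (Fin p)) (β : Perm (Fin q)) (j : ℕ) (hj : j < q) (hj' : p + j < p + q) :
    mkPerm A hA hA' α β ⟨p + j, hj'⟩ = Aᶜ.orderEmbOfFin hA' (β ⟨j, hj⟩) := by
  have h1 : (⟨p + j, hj'⟩ : Fin (p+q)) = Fin.natAdd p ⟨j, hj⟩ := rfl
  rw [h1]
  have h2 : (mkPerm A hA hA' α β) (Fin.natAdd p ⟨j, hj⟩) =
    (((Equiv.sumCongr (Equiv.refl _) (Equiv.subtypeEquivRight (fun _ => Finset.mem_compl))).trans
      (Equiv.sumCompl (· ∈ A)))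
      ((Equiv.sumCongr (α.trans (A.orderIsoOfFin hA).toEquiv)
      (β.trans (Aᶜ.orderIsoOfFin hA').toEquiv))
        (finSumFinEquiv.symm (Fin.natAdd p ⟨j, hj⟩)))) := rfl
  rw [h2]
  rw [finSumFinEquiv_symm_apply_natAdd]
  simp only [Equiv.sumCongr_apply, Sum.map_inr, Equiv.trans_apply,
    Equiv.sumCompl_apply_inr, Equiv.subtypeEquivRight_apply]
  exact (Finset.coe_orderIsoOfFin_apply Aᶜ hA' _)

theorem compl_card (A : Finset (Fin (p + q))) (hA : A.card = p) : Aᶜ.card = q := by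
  rw [Finset.card_compl, hA]; simp

theorem mkPerm_mem_iff (A : Finset (Fin (p + q))) (hA : A.card = p) (hA' : Aᶜ.card = q)
    (α : Perm (Fin p)) (β : Perm (Fin q)) (x : Fin (p + q)) :
    x ∈ A ↔ ∃ j : Fin p, ∃ hj' : (j : ℕ) < p + q, mkPerm A hA hA' α β ⟨j, hj'⟩ = x := by
  constructor
  · intro hx
    refine ⟨α.symm ((A.orderIsoOfFin hA).symm ⟨x, hx⟩), by omega, ?_⟩
    rw [mkPerm_left A hA hA' α β _ (α.symm ((A.orderIsoOfFin hA).symm ⟨x, hx⟩)).isLt]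
    simp only [Fin.eta, Equiv.apply_symm_apply]
    rw [← Finset.coe_orderIsoOfFin_apply]
    simp
  · rintro ⟨j, hj', rfl⟩
    rw [mkPerm_left A hA hA' α β _ j.isLt]
    exact Finset.orderEmbOfFin_mem A hA _

theorem mkPerm_injective (A A' : Finset (Fin (p + q))) (hA : A.card = p) (hA2 : A'.card = p)
    (hA' : Aᶜ.card = q) (hA2' : A'ᶜ.card = q) (α α' : Perm (Fin p)) (β β' : Perm (Fin q))
    (h : mkPerm A hA hA' α β = mkPerm A' hA2 hA2' α' β') : A = A' ∧ α = α' ∧ β = β' := by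
  have hAA : A = A' := by
    ext x
    rw [mkPerm_mem_iff A hA hA' α β x, mkPerm_mem_iff A' hA2 hA2' α' β' x, h]
  subst hAA
  have hAe : hA = hA2 := rfl
  have hAe' : hA' = hA2' := rfl
  subst hAe; subst hAe'
  refine ⟨rfl, ?_, ?_⟩
  · ext j
    have h1 := mkPerm_left A hA hA' α β j (j.isLt) (by omega)
    have h2 := mkPerm_left A hA hA' α' β' j (j.isLt) (by omega)
    rw [h] at h1
    rw [h1] at h2
    simp only [Fin.eta] at h2
    exact Fin.val_eq_of_eq ((A.orderEmbOfFin hA).injective h2)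
  · ext j
    have h1 := mkPerm_right A hA hA' α β j (j.isLt) (by omega)
    have h2 := mkPerm_right A hA hA' α' β' j (j.isLt) (by omega)
    rw [h] at h1
    rw [h1] at h2
    simp only [Fin.eta] at h2
    exact Fin.val_eq_of_eq ((Aᶜ.orderEmbOfFin hA').injective h2)

theorem mkPerm_right' (A : Finset (Fin (p + q))) (hA : A.card = p) (hA' : Aᶜ.card = q)
    (α : Perm (Fin p)) (β : Perm (Fin q)) (j : ℕ) (hj' : j < p + q)
    (jq : ℕ) (hjq : jq < q) (hje : j = p + jq) :
    mkPerm A hA hA' α β ⟨j, hj'⟩ = Aᶜ.orderEmbOfFin hA' (β ⟨jq, hjq⟩) := by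
  subst hje
  exact mkPerm_right A hA hA' α β jq hjq hj'

noncomputable def Psi (p q : ℕ) :
    ({A : Finset (Fin (p + q)) // A.card = p} × (Perm (Fin p) × Perm (Fin q))) →
      Perm (Fin (p + q)) :=
  fun x => mkPerm x.1.1 x.1.2 (compl_card x.1.1 x.1.2) x.2.1 x.2.2

theorem Psi_bijective (p q : ℕ) : Function.Bijective (Psi p q) := by
  rw [Fintype.bijective_iff_injective_and_card]
  constructor
  · rintro ⟨⟨A, hA⟩, α, β⟩ ⟨⟨A', hA2⟩, α', β'⟩ h
    obtain ⟨h1, h2, h3⟩ := mkPerm_injective A A' hA hA2 _ _ α α' β β' h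
    subst h1; subst h2; subst h3; rfl
  · rw [Fintype.card_prod, Fintype.card_prod, Fintype.card_finset_len,
      Fintype.card_perm, Fintype.card_perm, Fintype.card_perm, Fintype.card_fin,
      Fintype.card_fin, Fintype.card_fin]
    rw [← Nat.choose_mul_factorial_mul_factorial (Nat.le_add_right p q)]
    rw [Nat.add_sub_cancel_left]
    ring

section Transfer

variable (A : Finset (Fin (p + q))) (hA : A.card = p) (hA' : Aᶜ.card = q)
  (α : Perm (Fin p)) (β : Perm (Fin q))

theorem peak_left_iff (i : ℕ) (hi : i < p) (hp : 0 < q) :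
    IsPeak (mkPerm A hA hA' α β) i ↔ IsPeak α i := by
  unfold IsPeak
  constructor
  · rintro ⟨h2, h3, hc1, hc2⟩
    refine ⟨h2, hi, ?_, ?_⟩
    · rw [mkPerm_left A hA hA' α β (i-2) (by omega) (by omega),
        mkPerm_left A hA hA' α β (i-1) (by omega) (by omega)] at hc1
      rwa [OrderEmbedding.lt_iff_lt] at hc1
    · rw [mkPerm_left A hA hA' α β i (by omega) (by omega),
        mkPerm_left A hA hA' α β (i-1) (by omega) (by omega)] at hc2
      rwa [OrderEmbedding.lt_iff_lt] at hc2
  · rintro ⟨h2, h3, hc1, hc2⟩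
    refine ⟨h2, by omega, ?_, ?_⟩
    · rw [mkPerm_left A hA hA' α β (i-2) (by omega) (by omega),
        mkPerm_left A hA hA' α β (i-1) (by omega) (by omega), OrderEmbedding.lt_iff_lt]
      exact hc1
    · rw [mkPerm_left A hA hA' α β i (by omega) (by omega),
        mkPerm_left A hA hA' α β (i-1) (by omega) (by omega), OrderEmbedding.lt_iff_lt]
      exact hc2

theorem peak_right_iff (i : ℕ) (h2i : 2 ≤ i) (hi : i < q) :
    IsPeak (mkPerm A hA hA' α β) (p + i) ↔ IsPeak β i := by
  unfold IsPeak
  constructor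
  · rintro ⟨h2, h3, hc1, hc2⟩
    refine ⟨h2i, hi, ?_, ?_⟩
    · rw [mkPerm_right' A hA hA' α β (p+i-2) (by omega) (i-2) (by omega) (by omega),
        mkPerm_right' A hA hA' α β (p+i-1) (by omega) (i-1) (by omega) (by omega)] at hc1
      rwa [OrderEmbedding.lt_iff_lt] at hc1
    · rw [mkPerm_right' A hA hA' α β (p+i) (by omega) i (by omega) (by omega),
        mkPerm_right' A hA hA' α β (p+i-1) (by omega) (i-1) (by omega) (by omega)] at hc2
      rwa [OrderEmbedding.lt_iff_lt] at hc2
  · rintro ⟨h2, h3, hc1, hc2⟩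
    refine ⟨by omega, by omega, ?_, ?_⟩
    · rw [mkPerm_right' A hA hA' α β (p+i-2) (by omega) (i-2) (by omega) (by omega),
        mkPerm_right' A hA hA' α β (p+i-1) (by omega) (i-1) (by omega) (by omega),
        OrderEmbedding.lt_iff_lt]
      exact hc1
    · rw [mkPerm_right' A hA hA' α β (p+i) (by omega) i (by omega) (by omega),
        mkPerm_right' A hA hA' α β (p+i-1) (by omega) (i-1) (by omega) (by omega),
        OrderEmbedding.lt_iff_lt]
      exact hc2

theorem no_peak_at_p (hp1 : 2 ≤ p) (hpk : IsPeak α (p - 1)) :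
    ¬ IsPeak (mkPerm A hA hA' α β) p := by
  rintro ⟨h2, h3, hc1, hc2⟩
  obtain ⟨g2, g3, gc1, gc2⟩ := hpk
  -- gc2 : α ⟨p-1⟩ < α ⟨p-2⟩ , i.e. σ pos (p-1) < σ pos (p-2); hc1 : σ ⟨p-2⟩ < σ ⟨p-1⟩
  rw [mkPerm_left A hA hA' α β (p-2) (by omega) (by omega),
    mkPerm_left A hA hA' α β (p-1) (by omega) (by omega), OrderEmbedding.lt_iff_lt] at hc1
  have := gc2
  have e : ∀ (e1 : p - 1 - 1 < p) (e2 : p - 2 < p), (⟨p-1-1, e1⟩ : Fin p) = ⟨p-2, e2⟩ :=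
    fun _ _ => by simp only [Fin.mk.injEq]; omega
  rw [e _ (by omega)] at this
  exact absurd hc1 (not_lt.2 (le_of_lt this))

theorem no_peak_at_p1 (hq : 3 ≤ q) (hpk : IsPeak β 2) :
    ¬ IsPeak (mkPerm A hA hA' α β) (p + 1) := by
  rintro ⟨h2, h3, hc1, hc2⟩
  obtain ⟨g2, g3, gc1, gc2⟩ := hpk
  -- gc1 : β 0 < β 1 ; hc2 : σ ⟨p+1⟩ < σ ⟨p+1-1⟩ = σ ⟨p⟩
  rw [mkPerm_right' A hA hA' α β (p+1) (by omega) 1 (by omega) (by omega),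
    mkPerm_right' A hA hA' α β (p+1-1) (by omega) 0 (by omega) (by omega),
    OrderEmbedding.lt_iff_lt] at hc2
  exact absurd hc2 (not_lt.2 (le_of_lt gc1))

end Transfer

theorem mem_peakSet {n : ℕ} {σ : Equiv.Perm (Fin n)} {i : ℕ} :
    i ∈ peakSet σ ↔ i < n ∧ IsPeak σ i := by
  classical
  simp [peakSet, Finset.mem_filter]

theorem peak_transfer (A : Finset (Fin (p + q))) (hA : A.card = p) (hA' : Aᶜ.card = q)
    (α : Perm (Fin p)) (β : Perm (Fin q)) (SL SR Sg : Finset ℕ)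
    (h1 : ∀ i < p, (i ∈ Sg ↔ i ∈ SL))
    (h2 : ∀ i, (p + i ∈ Sg ↔ i ∈ SR))
    (h3 : ∀ x ∈ SL, x < p)
    (h4 : ∀ x ∈ SR, 2 ≤ x ∧ x < q)
    (h5 : p = 1 ∨ p - 1 ∈ SL)
    (h6 : 2 ∈ SR) (hp : 1 ≤ p) :
    peakSet (mkPerm A hA hA' α β) = Sg ↔ (peakSet α = SL ∧ peakSet β = SR) := by
  have hq3 : 3 ≤ q := by have := (h4 2 h6).2; omega
  constructor
  · intro hσ
    constructor
    · ext i
      simp only [mem_peakSet]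
      constructor
      · rintro ⟨hip, hpk⟩
        have hσpk : IsPeak (mkPerm A hA hA' α β) i :=
          (peak_left_iff A hA hA' α β i hip (by omega)).2 hpk
        have : i ∈ peakSet (mkPerm A hA hA' α β) :=
          mem_peakSet.2 ⟨by omega, hσpk⟩
        rw [hσ] at this
        exact (h1 i hip).1 this
      · intro hiSL
        have hip := h3 i hiSL
        have : i ∈ peakSet (mkPerm A hA hA' α β) := by
          rw [hσ]; exact (h1 i hip).2 hiSL
        have := (mem_peakSet.1 this).2
        exact ⟨hip, (peak_left_iff A hA hA' α β i hip (by omega)).1 this⟩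
    · ext i
      simp only [mem_peakSet]
      constructor
      · rintro ⟨hiq, hpk⟩
        have h2i : 2 ≤ i := hpk.1
        have hσpk : IsPeak (mkPerm A hA hA' α β) (p + i) :=
          (peak_right_iff A hA hA' α β i h2i hiq).2 hpk
        have : p + i ∈ peakSet (mkPerm A hA hA' α β) :=
          mem_peakSet.2 ⟨by omega, hσpk⟩
        rw [hσ] at this
        exact (h2 i).1 this
      · intro hiSR
        obtain ⟨h2i, hiq⟩ := h4 i hiSR
        have : p + i ∈ peakSet (mkPerm A hA hA' α β) := by
          rw [hσ]; exact (h2 i).2 hiSR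
        have := (mem_peakSet.1 this).2
        exact ⟨hiq, (peak_right_iff A hA hA' α β i h2i hiq).1 this⟩
  · rintro ⟨hα, hβ⟩
    ext i
    simp only [mem_peakSet]
    constructor
    · rintro ⟨hin, hpk⟩
      rcases Nat.lt_or_ge i p with hip | hip
      · refine (h1 i hip).2 ?_
        rw [← hα]
        exact mem_peakSet.2 ⟨by omega,
          (peak_left_iff A hA hA' α β i hip (by omega)).1 hpk⟩
      · rcases Nat.lt_or_ge i (p + 2) with hi2 | hi2
        · exfalso
          rcases Nat.eq_or_lt_of_le hip with he | hlt
          · -- i = p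
            rcases h5 with hp1 | hSL
            · obtain ⟨g2, -, -⟩ := hpk; omega
            · have hpk1 : IsPeak α (p - 1) := by
                have : p - 1 ∈ peakSet α := by rw [hα]; exact hSL
                exact (mem_peakSet.1 this).2
              have hp2 : 2 ≤ p := by
                obtain ⟨g2, g3, -⟩ := hpk1; omega
              exact no_peak_at_p A hA hA' α β hp2 hpk1 (he ▸ hpk)
          · -- i = p + 1
            have hie : i = p + 1 := by omega
            have hpk2 : IsPeak β 2 := by
              have : 2 ∈ peakSet β := by rw [hβ]; exact h6
              exact (mem_peakSet.1 this).2
            exact no_peak_at_p1 A hA hA' α β hq3 hpk2 (hie ▸ hpk)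
        · -- i ≥ p + 2
          have hie : i = p + (i - p) := by omega
          rw [hie] at hpk
          have hβpk : IsPeak β (i - p) :=
            (peak_right_iff A hA hA' α β (i - p) (by omega) (by omega)).1 hpk
          have : i - p ∈ SR := by
            rw [← hβ]
            exact mem_peakSet.2 ⟨by omega, hβpk⟩
          have := (h2 (i - p)).2 this
          rwa [← hie] at this
    · intro hiSg
      rcases Nat.lt_or_ge i p with hip | hip
      · have : i ∈ peakSet α := by rw [hα]; exact (h1 i hip).1 hiSg
        have := (mem_peakSet.1 this).2
        exact ⟨by omega, (peak_left_iff A hA hA' α β i hip (by omega)).2 this⟩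
      · have hie : i = p + (i - p) := by omega
        have hiSR : i - p ∈ SR := (h2 (i - p)).1 (hie ▸ hiSg)
        obtain ⟨h2i, hiq⟩ := h4 _ hiSR
        have : i - p ∈ peakSet β := by rw [hβ]; exact hiSR
        have := (mem_peakSet.1 this).2
        have hres := (peak_right_iff A hA hA' α β (i - p) h2i hiq).2 this
        rw [← hie] at hres
        exact ⟨by omega, hres⟩

def prodSubtypeEquiv {A : Type*} {B : Type*} (P : B → Prop) :
    {x : A × B // P x.2} ≃ A × {b : B // P b} :=
  ⟨fun x => (x.1.1, ⟨x.1.2, x.2⟩), fun y => ⟨(y.1, y.2.1), y.2.2⟩,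
    fun _ => rfl, fun _ => rfl⟩

theorem abstract_split (p q : ℕ) (SL SR Sg : Finset ℕ)
    (h1 : ∀ i < p, (i ∈ Sg ↔ i ∈ SL))
    (h2 : ∀ i, (p + i ∈ Sg ↔ i ∈ SR))
    (h3 : ∀ x ∈ SL, x < p)
    (h4 : ∀ x ∈ SR, 2 ≤ x ∧ x < q)
    (h5 : p = 1 ∨ p - 1 ∈ SL)
    (h6 : 2 ∈ SR) (hp : 1 ≤ p) :
    numPeakSet (p + q) Sg = (p + q).choose p * numPeakSet p SL * numPeakSet q SR := by
  unfold numPeakSet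
  have e1 : {x : ({A : Finset (Fin (p + q)) // A.card = p} ×
      (Perm (Fin p) × Perm (Fin q))) // peakSet (Psi p q x) = Sg} ≃
      {σ : Perm (Fin (p + q)) // peakSet σ = Sg} :=
    (Equiv.ofBijective (Psi p q) (Psi_bijective p q)).subtypeEquiv (fun x => Iff.rfl)
  have e2 : {x : ({A : Finset (Fin (p + q)) // A.card = p} ×
      (Perm (Fin p) × Perm (Fin q))) // peakSet (Psi p q x) = Sg} ≃
      {x : ({A : Finset (Fin (p + q)) // A.card = p} × (Perm (Fin p) × Perm (Fin q))) //
        peakSet x.2.1 = SL ∧ peakSet x.2.2 = SR} := by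
    apply Equiv.subtypeEquivRight
    rintro ⟨⟨A, hA⟩, α, β⟩
    exact peak_transfer A hA _ α β SL SR Sg h1 h2 h3 h4 h5 h6 hp
  have e3 : {x : ({A : Finset (Fin (p + q)) // A.card = p} ×
       (Perm (Fin p) × Perm (Fin q))) //
        peakSet x.2.1 = SL ∧ peakSet x.2.2 = SR} ≃
      ({A : Finset (Fin (p + q)) // A.card = p} ×
        ({α : Perm (Fin p) // peakSet α = SL} × {β : Perm (Fin q) // peakSet β = SR})) :=
    (prodSubtypeEquiv (fun b : Perm (Fin p) × Perm (Fin q) =>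
        peakSet b.1 = SL ∧ peakSet b.2 = SR)).trans
      ((Equiv.refl _).prodCongr (Equiv.subtypeProdEquivProd (p := fun α : Perm (Fin p) => peakSet α = SL) (q := fun β : Perm (Fin q) => peakSet β = SR)))
  rw [← Nat.card_congr e1, Nat.card_congr e2, Nat.card_congr e3]
  rw [Nat.card_prod, Nat.card_prod]
  rw [Nat.card_eq_fintype_card (α := {A : Finset (Fin (p + q)) // A.card = p}),
    Fintype.card_finset_len, Fintype.card_fin]
  ring

theorem mem_compPeaks {l : List ℕ} {x : ℕ} :
    x ∈ compPeaks l ↔ ∃ i, i < l.length - 1 ∧ (l.take (i+1)).sum = x := by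
  simp [compPeaks, Finset.mem_image, Finset.mem_range]

theorem sum_take_le (b : List ℕ) (j : ℕ) : (b.take j).sum ≤ b.sum := by
  have := b.sum_take_add_sum_drop j
  omega

theorem sum_take_lt {b : List ℕ} (hb : ∀ x ∈ b, 0 < x) {j : ℕ} (hj : j < b.length) :
    (b.take j).sum < b.sum := by
  have hsplit := b.sum_take_add_sum_drop j
  have hd : b.drop j ≠ [] := by
    intro h
    have := congrArg List.length h
    simp [List.length_drop] at this
    omega
  have hpos : 0 < (b.drop j).sum := by
    cases hcase : b.drop j with
    | nil => exact absurd hcase hd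
    | cons y t =>
      have hy : y ∈ b := (List.drop_subset j b) (by rw [hcase]; exact List.mem_cons_self)
      have := hb y hy
      simp [hcase, List.sum_cons]
      omega
  omega

theorem take_low (a l : List ℕ) (j : ℕ) (hj : j ≤ a.length) :
    (a ++ l).take j = a.take j := by
  rw [List.take_append, show j - a.length = 0 from by omega]
  simp

theorem take_high (a b : List ℕ) (j : ℕ) :
    ((a ++ 3 :: b).take (a.length + 1 + j)).sum = a.sum + 3 + (b.take j).sum := by
  rw [List.take_append,
    List.take_of_length_le (show a.length ≤ a.length + 1 + j from by omega),
    show a.length + 1 + j - a.length = j + 1 from by omega,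
    List.take_succ_cons, List.sum_append, List.sum_cons]
  omega

theorem Pcomp_split (a b : List ℕ) (hb : ∀ x ∈ b, 0 < x) (hb0 : b ≠ []) :
    Pcomp (a ++ 3 :: b) =
      (a.sum + 3 + b.sum).choose (a.sum + 1) * Pcomp (a ++ [1]) * Pcomp (2 :: b) := by
  have hbl : 1 ≤ b.length := List.length_pos_iff.2 hb0
  have hlen : (a ++ 3 :: b).length = a.length + 1 + b.length := by simp; omega
  have hlenL : (a ++ [1]).length = a.length + 1 := by simp
  have h1 : ∀ i < a.sum + 1, (i ∈ compPeaks (a ++ 3 :: b) ↔ i ∈ compPeaks (a ++ [1])) := by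
    intro i hi
    rw [mem_compPeaks, mem_compPeaks]
    constructor
    · rintro ⟨j, hj, hs⟩
      rcases Nat.lt_or_ge j a.length with hja | hja
      · refine ⟨j, by omega, ?_⟩
        rw [take_low a [1] (j+1) (by omega)]
        rwa [take_low a (3 :: b) (j+1) (by omega)] at hs
      · exfalso
        rw [show j + 1 = a.length + 1 + (j - a.length) from by omega, take_high] at hs
        omega
    · rintro ⟨j, hj, hs⟩
      rw [hlenL] at hj
      refine ⟨j, by omega, ?_⟩
      rw [take_low a [1] (j+1) (by omega)] at hs
      rwa [take_low a (3 :: b) (j+1) (by omega)]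
  have h2 : ∀ i, ((a.sum + 1) + i ∈ compPeaks (a ++ 3 :: b) ↔ i ∈ compPeaks (2 :: b)) := by
    intro i
    rw [mem_compPeaks, mem_compPeaks]
    constructor
    · rintro ⟨j, hj, hs⟩
      rcases Nat.lt_or_ge j a.length with hja | hja
      · exfalso
        rw [take_low a (3 :: b) (j+1) (by omega)] at hs
        have := sum_take_le a (j+1)
        omega
      · refine ⟨j - a.length, by rw [hlen] at hj; simp; omega, ?_⟩
        rw [show j + 1 = a.length + 1 + (j - a.length) from by omega, take_high] at hs
        rw [List.take_succ_cons, List.sum_cons]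
        omega
    · rintro ⟨j, hj, hs⟩
      simp only [List.length_cons] at hj
      rw [List.take_succ_cons, List.sum_cons] at hs
      refine ⟨a.length + j, by rw [hlen]; omega, ?_⟩
      rw [show a.length + j + 1 = a.length + 1 + j from by omega, take_high]
      omega
  have h3 : ∀ x ∈ compPeaks (a ++ [1]), x < a.sum + 1 := by
    intro x hx
    rw [mem_compPeaks] at hx
    obtain ⟨j, hj, hs⟩ := hx
    rw [hlenL] at hj
    rw [take_low a [1] (j+1) (by omega)] at hs
    have := sum_take_le a (j+1)
    omega
  have h4 : ∀ x ∈ compPeaks (2 :: b), 2 ≤ x ∧ x < b.sum + 2 := by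
    intro x hx
    rw [mem_compPeaks] at hx
    obtain ⟨j, hj, hs⟩ := hx
    simp only [List.length_cons] at hj
    rw [List.take_succ_cons, List.sum_cons] at hs
    have := sum_take_lt hb (show j < b.length from by omega)
    omega
  have h5 : a.sum + 1 = 1 ∨ (a.sum + 1) - 1 ∈ compPeaks (a ++ [1]) := by
    rcases eq_or_ne a [] with rfl | ha0
    · left; simp
    · right
      have hal : 1 ≤ a.length := List.length_pos_iff.2 ha0
      rw [mem_compPeaks]
      refine ⟨a.length - 1, by rw [hlenL]; omega, ?_⟩
      rw [show a.length - 1 + 1 = a.length from by omega, take_low a [1] a.length (le_refl _),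
        List.take_length]
      omega
  have h6 : 2 ∈ compPeaks (2 :: b) := by
    rw [mem_compPeaks]
    exact ⟨0, by simp; omega, by simp⟩
  have hsum : (a ++ 3 :: b).sum = (a.sum + 1) + (b.sum + 2) := by
    simp [List.sum_append, List.sum_cons]; omega
  have hsumL : (a ++ [1]).sum = a.sum + 1 := by simp
  have hsumR : (2 :: b).sum = b.sum + 2 := by simp [List.sum_cons]; omega
  rw [Pcomp, Pcomp, Pcomp, hsum, hsumL, hsumR,
    show a.sum + 3 + b.sum = (a.sum + 1) + (b.sum + 2) from by omega]
  exact abstract_split (a.sum + 1) (b.sum + 2) _ _ _ h1 h2 h3 h4 h5 h6 (by omega)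

theorem chain3_congr : ∀ (k : ℕ) (c d : ℕ → List ℕ), (∀ i ≤ k, c i = d i) →
    chain3 c k = chain3 d k
  | 0, c, d, h => h 0 (le_refl 0)
  | k+1, c, d, h => by
    show chain3 c k ++ [3] ++ c (k+1) = chain3 d k ++ [3] ++ d (k+1)
    rw [chain3_congr k c d (fun i hi => h i (by omega)), h (k+1) (le_refl _)]

theorem chain3_shift : ∀ (k : ℕ) (c : ℕ → List ℕ),
    chain3 c (k+1) = c 0 ++ 3 :: chain3 (fun i => c (i+1)) k
  | 0, c => by
    show chain3 c 0 ++ [3] ++ c 1 = c 0 ++ 3 :: (fun i => c (i+1)) 0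
    show c 0 ++ [3] ++ c 1 = c 0 ++ 3 :: c 1
    simp
  | k+1, c => by
    show chain3 c (k+1) ++ [3] ++ c (k+2) = _
    rw [chain3_shift k c]
    show (c 0 ++ 3 :: chain3 (fun i => c (i+1)) k) ++ [3] ++ (fun i => c (i+1)) (k+1) =
      c 0 ++ 3 :: (chain3 (fun i => c (i+1)) k ++ [3] ++ (fun i => c (i+1)) (k+1))
    simp

theorem chain3_ne_nil (k : ℕ) (hk : 1 ≤ k) (c : ℕ → List ℕ) : chain3 c k ≠ [] := by
  obtain ⟨j, rfl⟩ : ∃ j, k = j + 1 := ⟨k - 1, by omega⟩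
  show chain3 c j ++ [3] ++ c (j+1) ≠ []
  simp

theorem chain3_pos : ∀ (k : ℕ) (c : ℕ → List ℕ), (∀ i ≤ k, ∀ x ∈ c i, 0 < x) →
    ∀ x ∈ chain3 c k, 0 < x
  | 0, c, h => h 0 (le_refl 0)
  | k+1, c, h => by
    intro x hx
    have : x ∈ chain3 c k ++ [3] ++ c (k+1) := hx
    simp only [List.mem_append, List.mem_singleton] at this
    rcases this with (h1 | h1) | h1
    · exact chain3_pos k c (fun i hi => h i (by omega)) x h1
    · omega
    · exact h (k+1) (le_refl _) x h1

theorem cons2_chain3 : ∀ (k : ℕ) (c : ℕ → List ℕ),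
    2 :: chain3 c k = chain3 (fun i => if i = 0 then 2 :: c 0 else c i) k
  | 0, c => by simp [chain3]
  | k+1, c => by
    show 2 :: (chain3 c k ++ [3] ++ c (k+1)) =
      chain3 (fun i => if i = 0 then 2 :: c 0 else c i) k ++ [3] ++
        (if k + 1 = 0 then 2 :: c 0 else c (k+1))
    rw [← cons2_chain3 k c, if_neg (by omega)]
    simp

theorem chain3_sum : ∀ (k : ℕ) (c : ℕ → List ℕ),
    (chain3 c k).sum = 3 * k + ∑ i ∈ Finset.range (k+1), (c i).sum
  | 0, c => by simp [chain3]
  | k+1, c => by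
    have h1 : (chain3 c (k+1)).sum = (chain3 c k).sum + 3 + (c (k+1)).sum := by
      show (chain3 c k ++ [3] ++ c (k+1)).sum = _
      rw [List.sum_append, List.sum_append]
      simp
    conv_rhs => rw [Finset.sum_range_succ]
    rw [h1, chain3_sum k c]
    ring

theorem prod_Ioo_succ (k : ℕ) (hk : 1 ≤ k) (f : ℕ → ℕ) :
    ∏ i ∈ Finset.Ioo 0 (k+1), f i = f 1 * ∏ i ∈ Finset.Ioo 0 k, f (i+1) := by
  have h : Finset.Ioo 0 (k+1) = insert 1 ((Finset.Ioo 0 k).image (· + 1)) := by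
    ext x
    simp only [Finset.mem_Ioo, Finset.mem_insert, Finset.mem_image]
    constructor
    · rintro ⟨hx0, hxk⟩
      rcases eq_or_ne x 1 with rfl | hx1
      · exact Or.inl rfl
      · exact Or.inr ⟨x - 1, ⟨by omega, by omega⟩, by omega⟩
    · rintro (rfl | ⟨a, ⟨ha0, hak⟩, rfl⟩)
      · exact ⟨by omega, by omega⟩
      · exact ⟨by omega, by omega⟩
  have h1 : (1:ℕ) ∉ (Finset.Ioo 0 k).image (· + 1) := by
    simp only [Finset.mem_image, Finset.mem_Ioo]
    rintro ⟨a, ⟨ha1, ha2⟩, ha3⟩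
    omega
  have h2 : ∀ x ∈ Finset.Ioo 0 k, ∀ y ∈ Finset.Ioo 0 k, x + 1 = y + 1 → x = y := by
    intro x _ y _ h
    omega
  rw [h, Finset.prod_insert h1, Finset.prod_image h2]

theorem assemble (C L0 Pg F0 F1 Pi1 Fk Nf Mf R1 Pi2 Rk : ℕ)
    (hIH : Pg * (F1 * Pi1 * Fk) = Mf * (R1 * Pi2 * Rk))
    (hkey : C * F0 * Mf = Nf) :
    C * L0 * Pg * (F0 * (F1 * Pi1) * Fk) = Nf * (L0 * (R1 * Pi2) * Rk) := by
  calc C * L0 * Pg * (F0 * (F1 * Pi1) * Fk)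
      = (C * F0 * L0) * (Pg * (F1 * Pi1 * Fk)) := by ring
    _ = (C * F0 * L0) * (Mf * (R1 * Pi2 * Rk)) := by rw [hIH]
    _ = (C * F0 * Mf) * (L0 * (R1 * Pi2) * Rk) := by ring
    _ = Nf * (L0 * (R1 * Pi2) * Rk) := by rw [hkey]

theorem chain_formula : ∀ (k : ℕ), 1 ≤ k → ∀ (c : ℕ → List ℕ),
    (∀ i, 1 ≤ i → i ≤ k → ∀ x ∈ c i, 0 < x) → c k ≠ [] →
    Pcomp (chain3 c k) * (((c 0).sum + 1).factorial *
        (∏ i ∈ Finset.Ioo 0 k, ((c i).sum + 3).factorial) * ((c k).sum + 2).factorial) =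
      ((chain3 c k).sum).factorial * (Pcomp (c 0 ++ [1]) *
        (∏ i ∈ Finset.Ioo 0 k, Pcomp (2 :: (c i ++ [1]))) * Pcomp (2 :: c k)) := by
  intro k hk
  induction k, hk using Nat.le_induction with
  | base =>
    intro c hpos hne
    have hIoo : Finset.Ioo 0 1 = (∅ : Finset ℕ) := by
      ext x
      simp only [Finset.mem_Ioo, Finset.notMem_empty, iff_false]
      omega
    have hch : chain3 c 1 = c 0 ++ 3 :: c 1 := chain3_shift 0 c
    rw [hch, hIoo]
    simp only [Finset.prod_empty]
    rw [Pcomp_split (c 0) (c 1) (hpos 1 (le_refl 1) (le_refl 1)) hne]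
    have hsum : (c 0 ++ 3 :: c 1).sum = (c 0).sum + 3 + (c 1).sum := by
      rw [List.sum_append, List.sum_cons]
      omega
    rw [hsum]
    have key := Nat.choose_mul_factorial_mul_factorial
      (show (c 0).sum + 1 ≤ (c 0).sum + 3 + (c 1).sum from by omega)
    rw [show (c 0).sum + 3 + (c 1).sum - ((c 0).sum + 1) = (c 1).sum + 2 from by omega] at key
    rw [← key]
    ring
  | succ k hk IH =>
    intro c hpos hne
    have hbpos : ∀ x ∈ chain3 (fun i => c (i+1)) k, 0 < x :=
      chain3_pos k _ (fun i hi => hpos (i+1) (by omega) (by omega))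
    have hbne : chain3 (fun i => c (i+1)) k ≠ [] := chain3_ne_nil k hk _
    have hch : chain3 c (k+1) = c 0 ++ 3 :: chain3 (fun i => c (i+1)) k := chain3_shift k c
    have hcons : 2 :: chain3 (fun i => c (i+1)) k =
        chain3 (fun i => if i = 0 then 2 :: c 1 else c (i+1)) k := by
      rw [cons2_chain3 k (fun i => c (i+1))]
    have hgpos : ∀ i, 1 ≤ i → i ≤ k →
        ∀ x ∈ (fun i => if i = 0 then 2 :: c 1 else c (i+1)) i, 0 < x := by
      intro i h1 h2
      simp only [if_neg (show ¬ i = 0 from by omega)]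
      exact hpos (i+1) (by omega) (by omega)
    have hgne : (fun i => if i = 0 then 2 :: c 1 else c (i+1)) k ≠ [] := by
      simp only [if_neg (show ¬ k = 0 from by omega)]
      exact hne
    have IH' := IH (fun i => if i = 0 then 2 :: c 1 else c (i+1)) hgpos hgne
    -- clean up IH'
    have e1 : (((fun i => if i = 0 then 2 :: c 1 else c (i+1)) 0).sum + 1) = (c 1).sum + 3 := by
      simp [List.sum_cons]
      omega
    have e2 : ((fun i => if i = 0 then 2 :: c 1 else c (i+1)) 0) ++ [1] = 2 :: (c 1 ++ [1]) := by
      simp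
    have e3 : (fun i => if i = 0 then 2 :: c 1 else c (i+1)) k = c (k+1) := by
      simp only [if_neg (show ¬ k = 0 from by omega)]
    have e4 : (chain3 (fun i => if i = 0 then 2 :: c 1 else c (i+1)) k).sum =
        (chain3 (fun i => c (i+1)) k).sum + 2 := by
      rw [← hcons, List.sum_cons]
      omega
    have eP1 : (∏ i ∈ Finset.Ioo 0 k,
          (((fun i => if i = 0 then 2 :: c 1 else c (i+1)) i).sum + 3).factorial) =
        ∏ i ∈ Finset.Ioo 0 k, ((c (i+1)).sum + 3).factorial := by
      refine Finset.prod_congr rfl (fun i hi => ?_)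
      rw [Finset.mem_Ioo] at hi
      simp only [if_neg (show ¬ i = 0 from by omega)]
    have eP2 : (∏ i ∈ Finset.Ioo 0 k,
          Pcomp (2 :: ((fun i => if i = 0 then 2 :: c 1 else c (i+1)) i ++ [1]))) =
        ∏ i ∈ Finset.Ioo 0 k, Pcomp (2 :: (c (i+1) ++ [1])) := by
      refine Finset.prod_congr rfl (fun i hi => ?_)
      rw [Finset.mem_Ioo] at hi
      simp only [if_neg (show ¬ i = 0 from by omega)]
    beta_reduce at e1 e2 e3 e4 eP1 eP2 IH'
    rw [e1, e2, e3, e4, eP1, eP2] at IH'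
    -- transform the goal
    have hNsum : (c 0 ++ 3 :: chain3 (fun i => c (i+1)) k).sum =
        (c 0).sum + 3 + (chain3 (fun i => c (i+1)) k).sum := by
      rw [List.sum_append, List.sum_cons]
      omega
    rw [hch, hNsum, Pcomp_split (c 0) _ hbpos hbne, hcons,
      prod_Ioo_succ k hk (fun i => ((c i).sum + 3).factorial),
      prod_Ioo_succ k hk (fun i => Pcomp (2 :: (c i ++ [1])))]
    have key := Nat.choose_mul_factorial_mul_factorial
      (show (c 0).sum + 1 ≤ (c 0).sum + 3 + (chain3 (fun i => c (i+1)) k).sum from by omega)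
    rw [show (c 0).sum + 3 + (chain3 (fun i => c (i+1)) k).sum - ((c 0).sum + 1) =
      (chain3 (fun i => c (i+1)) k).sum + 2 from by omega] at key
    exact assemble _ _ _ _ _ _ _ _ _ _ _ _ IH' key

theorem sum_range_decomp (k : ℕ) (hk : 1 ≤ k) (f : ℕ → ℕ) :
    ∑ i ∈ Finset.range (k+1), f i = f 0 + (∑ i ∈ Finset.Ioo 0 k, f i) + f k := by
  have h : Finset.range (k+1) = insert 0 (insert k (Finset.Ioo 0 k)) := by
    ext x
    simp only [Finset.mem_range, Finset.mem_insert, Finset.mem_Ioo]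
    omega
  have h0 : (0:ℕ) ∉ insert k (Finset.Ioo 0 k) := by
    simp only [Finset.mem_insert, Finset.mem_Ioo]
    omega
  have hkk : k ∉ Finset.Ioo 0 k := by
    simp only [Finset.mem_Ioo]
    omega
  rw [h, Finset.sum_insert h0, Finset.sum_insert hkk]
  ring

theorem invariance_middle_factors' (k : ℕ) (hk : 1 ≤ k) (c : ℕ → List ℕ)
    (hpos : ∀ i ≤ k, ∀ x ∈ c i, 0 < x) (hck : c k ≠ [])
    (τ : Equiv.Perm ℕ) (hτ : ∀ i, ¬(0 < i ∧ i < k) → τ i = i) :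
    Pcomp (chain3 c k) = Pcomp (chain3 (fun i => c (τ i)) k) := by
  have hτ0 : τ 0 = 0 := hτ 0 (by omega)
  have hτk : τ k = k := hτ k (by omega)
  have hmem : ∀ i ∈ Finset.Ioo 0 k, τ i ∈ Finset.Ioo 0 k := by
    intro i hi
    simp only [Finset.mem_Ioo] at hi ⊢
    by_contra hcon
    have h2 : τ (τ i) = τ i := hτ (τ i) (by tauto)
    have h3 : τ i = i := τ.injective h2
    rw [h3] at hcon
    exact hcon hi
  have hinj : ∀ a₁ ∈ Finset.Ioo 0 k, ∀ a₂ ∈ Finset.Ioo 0 k, τ a₁ = τ a₂ → a₁ = a₂ :=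
    fun a₁ _ a₂ _ h => τ.injective h
  have hsurj : ∀ j ∈ Finset.Ioo 0 k, ∃ i, ∃ hi : i ∈ Finset.Ioo 0 k, τ i = j := by
    intro j hj
    refine ⟨τ.symm j, ?_, τ.apply_symm_apply j⟩
    simp only [Finset.mem_Ioo] at hj ⊢
    by_contra hcon
    have h2 : τ (τ.symm j) = τ.symm j := hτ _ (by tauto)
    rw [τ.apply_symm_apply] at h2
    rw [← h2] at hcon
    exact hcon hj
  have hdpos : ∀ i, 1 ≤ i → i ≤ k → ∀ x ∈ c (τ i), 0 < x := by
    intro i h1 h2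
    rcases eq_or_ne i k with rfl | hik
    · rw [hτk]; exact hpos i (le_refl i)
    · have hm : τ i ∈ Finset.Ioo 0 k := hmem i (by simp only [Finset.mem_Ioo]; omega)
      rw [Finset.mem_Ioo] at hm
      exact hpos (τ i) (by omega)
  have hcpos : ∀ i, 1 ≤ i → i ≤ k → ∀ x ∈ c i, 0 < x := fun i _ h2 => hpos i h2
  have hdk : c (τ k) ≠ [] := by rw [hτk]; exact hck
  have E1 := chain_formula k hk c hcpos hck
  have E2 := chain_formula k hk (fun i => c (τ i)) hdpos hdk
  simp only [hτ0, hτk] at E2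
  have hSum : (chain3 (fun i => c (τ i)) k).sum = (chain3 c k).sum := by
    rw [chain3_sum, chain3_sum, sum_range_decomp k hk, sum_range_decomp k hk]
    simp only [hτ0, hτk]
    have : (∑ i ∈ Finset.Ioo 0 k, (c (τ i)).sum) = ∑ i ∈ Finset.Ioo 0 k, (c i).sum :=
      Finset.sum_bij (fun i _ => τ i) hmem hinj hsurj (fun i _ => rfl)
    rw [this]
  have hProdF : (∏ i ∈ Finset.Ioo 0 k, ((c (τ i)).sum + 3).factorial) =
      ∏ i ∈ Finset.Ioo 0 k, ((c i).sum + 3).factorial :=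
    Finset.prod_bij (fun i _ => τ i) hmem hinj hsurj (fun i _ => rfl)
  have hProdP : (∏ i ∈ Finset.Ioo 0 k, Pcomp (2 :: (c (τ i) ++ [1]))) =
      ∏ i ∈ Finset.Ioo 0 k, Pcomp (2 :: (c i ++ [1])) :=
    Finset.prod_bij (fun i _ => τ i) hmem hinj hsurj (fun i _ => rfl)
  rw [hSum, hProdF, hProdP] at E2
  have hEq := E1.trans E2.symm
  have hXpos : 0 < ((c 0).sum + 1).factorial *
      (∏ i ∈ Finset.Ioo 0 k, ((c i).sum + 3).factorial) * ((c k).sum + 2).factorial :=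
    Nat.mul_pos (Nat.mul_pos (Nat.factorial_pos _)
      (Finset.prod_pos (fun i _ => Nat.factorial_pos _))) (Nat.factorial_pos _)
  exact Nat.eq_of_mul_eq_mul_right hXpos hEq

theorem invariance_middle_factors (k : ℕ) (hk : 1 ≤ k) (c : ℕ → List ℕ)
    (hpos : ∀ i ≤ k, ∀ x ∈ c i, 0 < x) (hck : c k ≠ [])
    (τ : Equiv.Perm ℕ) (hτ : ∀ i, ¬(0 < i ∧ i < k) → τ i = i) :
    Pcomp (chain3 c k) = Pcomp (chain3 (fun i => c (τ i)) k) := by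
  exact invariance_middle_factors' k hk c hpos hck τ hτ
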